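/- For every r with 1 ≤ r ≤ p, every x ∈ ℝ with Δ(x) ∈ (−2, 2), and either root Γ of Γ² − Δ(x)·Γ + 1 = 0, one has j_{r,Γ}(x) ≠ 0. (Lemma 2.4: the Jost-type function j_r is nonvanishing on the interior of the bands.) -/

import Mathlib

open Polynomial Matrix

/-- The one-step transfer matrix `A_k(z)` for periodic OPRL. -/
noncomputable def JacobiA (a b : ℕ → ℝ) (k : ℕ) (z : ℂ) : Matrix (Fin 2) (Fin 2) ℂ :=
  ((a (k + 1) : ℂ))⁻¹ • !![z - (b (k + 1) : ℂ), -(a k : ℂ); (a (k + 1) : ℂ), 0]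

/-- The transfer matrix `T_n(z) = A_{n-1}(z) ⋯ A_0(z)`. -/
noncomputable def JacobiT (a b : ℕ → ℝ) : ℕ → ℂ → Matrix (Fin 2) (Fin 2) ℂ
  | 0, _ => 1
  | n + 1, z => JacobiA a b n z * JacobiT a b n z

/-- The discriminant `Δ(z) = tr T_p(z)`. -/
noncomputable def JacobiDisc (a b : ℕ → ℝ) (p : ℕ) (z : ℂ) : ℂ :=
  (JacobiT a b p z).trace

/-- The boundary-value Jost function `j_{r,Γ}(x) = a_Γ(x)·(T_r)₂₂ + b_Γ(x)·(T_r)₂₁`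
with `a_Γ(x) = (T_p)₂₁/(Γ - Γ⁻¹)`, `b_Γ(x) = ((T_p)₁₁ - Γ⁻¹)/(Γ - Γ⁻¹)`. -/
noncomputable def JacobiJostBand (a b : ℕ → ℝ) (p r : ℕ) (Γ : ℂ) (x : ℝ) : ℂ :=
  (JacobiT a b p (x : ℂ) 1 0 / (Γ - Γ⁻¹)) * (JacobiT a b r (x : ℂ) 1 1) +
    ((JacobiT a b p (x : ℂ) 0 0 - Γ⁻¹) / (Γ - Γ⁻¹)) * (JacobiT a b r (x : ℂ) 1 0)

/-- **Lemma 2.4.** For `1 ≤ r ≤ p`, all `x` in the interior of the bands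
(`Δ(x) ∈ (-2,2)`), and either root `Γ` of `Γ² - Δ(x)Γ + 1 = 0`, the Jost-type
function `j_{r,Γ}(x)` is nonzero. -/
theorem oprl_periodic_jost_nonvanishing_on_bands
    (p : ℕ) (hp : 1 ≤ p) (a b : ℕ → ℝ)
    (ha : ∀ n, 1 ≤ n → 0 < a n)
    (hpera : ∀ n, 1 ≤ n → a (n + p) = a n)
    (hperb : ∀ n, 1 ≤ n → b (n + p) = b n)
    (ha0 : a 0 = a p)
    (P : ℕ → Polynomial ℝ)
    (hP0 : P 0 = 1)
    (hPrec0 : (X : Polynomial ℝ) * P 0 = a 1 • P 1 + b 1 • P 0)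
    (hPrec : ∀ n, 1 ≤ n →
      (X : Polynomial ℝ) * P n = a (n + 1) • P (n + 1) + b (n + 1) • P n + a n • P (n - 1))
    (r : ℕ) (hr1 : 1 ≤ r) (hrp : r ≤ p)
    (x : ℝ)
    (hx : ∃ t : ℝ, t ∈ Set.Ioo (-2 : ℝ) 2 ∧ JacobiDisc a b p (x : ℂ) = (t : ℂ))
    (Γ : ℂ)
    (hΓ : Γ ^ 2 - JacobiDisc a b p (x : ℂ) * Γ + 1 = 0) :
    JacobiJostBand a b p r Γ x ≠ 0 := by
  intro hj
  obtain ⟨t, ht, hΔ⟩ := hx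
  set z : ℂ := (x : ℂ) with hz
  -- all a n are nonzero
  have haC : ∀ n : ℕ, (a n : ℂ) ≠ 0 := by
    intro n
    simp only [ne_eq, Complex.ofReal_eq_zero]
    cases n with
    | zero => rw [ha0]; exact (ha p hp).ne'
    | succ m => exact (ha (m + 1) (Nat.succ_le_succ (Nat.zero_le m))).ne'
  -- reality of transfer matrices
  have hreal : ∀ n, (JacobiT a b n z).map (starRingEnd ℂ) = JacobiT a b n z := by
    intro n
    induction n with
    | zero =>
      ext i j
      fin_cases i <;> fin_cases j <;> simp [JacobiT]
    | succ m ih =>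
      have hA : (JacobiA a b m z).map (starRingEnd ℂ) = JacobiA a b m z := by
        ext i j
        fin_cases i <;> fin_cases j <;>
          simp [JacobiA, hz, map_inv₀, Complex.conj_ofReal, _root_.map_mul, map_sub, map_neg]
      have hstep : JacobiT a b (m + 1) z = JacobiA a b m z * JacobiT a b m z := rfl
      rw [hstep, _root_.Matrix.map_mul, hA, ih]
  -- determinants
  have hdet : ∀ n, (JacobiT a b n z).det = ((a 0 : ℂ) / (a n : ℂ)) := by
    intro n
    induction n with
    | zero => simp [JacobiT, haC 0]
    | succ m ih =>
      have hAdet : (JacobiA a b m z).det = (a m : ℂ) / (a (m + 1) : ℂ) := by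
        rw [JacobiA, Matrix.det_smul, Matrix.det_fin_two_of]
        field_simp [haC (m + 1)]
        rw [mul_zero, zero_sub, neg_neg, one_div, inv_pow, Fintype.card_fin]
        calc _ = ((a (m + 1) : ℂ) ^ 2 * (((a (m + 1) : ℂ) ^ 2)⁻¹)) * (a m : ℂ) := by ring
          _ = _ := by rw [mul_inv_cancel₀ (pow_ne_zero 2 (haC (m + 1))), one_mul]
      have hstep : JacobiT a b (m + 1) z = JacobiA a b m z * JacobiT a b m z := rfl
      rw [hstep, Matrix.det_mul, hAdet, ih]
      field_simp [haC m, haC (m + 1)]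
  -- Γ facts
  have hΓ0 : Γ ≠ 0 := by
    intro h; rw [h] at hΓ; simp at hΓ
  have hΓΓ : Γ * Γ⁻¹ = 1 := mul_inv_cancel₀ hΓ0
  have hΓinv : Γ⁻¹ = JacobiDisc a b p z - Γ :=
    inv_eq_of_mul_eq_one_right (by linear_combination -hΓ)
  have hΓne : starRingEnd ℂ Γ ≠ Γ := by
    intro h
    have hre : Γ.im = 0 := by
      have := congrArg Complex.im h
      simp [Complex.conj_im] at this
      linarith
    set s := Γ.re with hs
    have hΓr : Γ = (s : ℂ) := by
      apply Complex.ext <;> simp [hs, hre]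
    rw [hΓr, hΔ] at hΓ
    have hcast : ((s ^ 2 - t * s + 1 : ℝ) : ℂ) = 0 := by push_cast; linear_combination hΓ
    have hreq : (s ^ 2 - t * s + 1 : ℝ) = 0 := by exact_mod_cast hcast
    obtain ⟨ht1, ht2⟩ := ht
    nlinarith [sq_nonneg (2 * s - t)]
  have hΓinvne : starRingEnd ℂ Γ⁻¹ ≠ Γ⁻¹ := by
    rw [map_inv₀]
    intro h
    exact hΓne (inv_injective h)
  have hΓdiff : Γ - Γ⁻¹ ≠ 0 := by
    intro h
    have h2 : Γ = Γ⁻¹ := by linear_combination h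
    have hsq : Γ ^ 2 = 1 := by
      have := hΓΓ; rw [← h2] at this; linear_combination this
    have : (Γ - 1) * (Γ + 1) = 0 := by linear_combination hsq
    rcases mul_eq_zero.mp this with h1 | h1
    · have : Γ = 1 := by linear_combination h1
      apply hΓne; rw [this]; simp
    · have : Γ = -1 := by linear_combination h1
      apply hΓne; rw [this]; simp
  -- entries
  set M := JacobiT a b p z with hM
  set S := JacobiT a b r z with hS
  have hMreal : ∀ i j, starRingEnd ℂ (M i j) = M i j := by
    intro i j
    have := congrFun (congrFun (hreal p) i) j
    simpa [Matrix.map_apply] using this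
  have hSreal : ∀ i j, starRingEnd ℂ (S i j) = S i j := by
    intro i j
    have := congrFun (congrFun (hreal r) i) j
    simpa [Matrix.map_apply] using this
  have htr : M 0 0 + M 1 1 = Γ + Γ⁻¹ := by
    rw [hΓinv]
    have hDd : JacobiDisc a b p z = M 0 0 + M 1 1 := by
      rw [JacobiDisc, Matrix.trace_fin_two, hM]
    rw [hDd]; ring
  have hdetM : M 0 0 * M 1 1 - M 0 1 * M 1 0 = 1 := by
    have h1 := hdet p
    rw [Matrix.det_fin_two] at h1
    rw [← hM] at h1
    rw [h1, ha0]
    exact div_self (haC p)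
  have hdetS : S 0 0 * S 1 1 - S 0 1 * S 1 0 ≠ 0 := by
    have h1 := hdet r
    rw [Matrix.det_fin_two] at h1
    rw [← hS] at h1
    rw [h1]
    exact div_ne_zero (haC 0) (haC r)
  -- main identity from hj
  have h2 : S 1 0 * (M 0 0 - Γ⁻¹) + S 1 1 * M 1 0 = 0 := by
    simp only [JacobiJostBand, ← hz, ← hM, ← hS] at hj
    rw [div_mul_eq_mul_div, div_mul_eq_mul_div, ← add_div, _root_.div_eq_zero_iff] at hj
    rcases hj with hj | hj
    · linear_combination hj
    · exact absurd hj hΓdiff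
  have h2' : S 1 0 * (M 0 0 - (starRingEnd ℂ Γ)⁻¹) + S 1 1 * M 1 0 = 0 := by
    have := congrArg (starRingEnd ℂ) h2
    simpa [map_add, _root_.map_mul, map_sub, map_inv₀, hMreal, hSreal] using this
  have hS10 : S 1 0 = 0 := by
    have hd : S 1 0 * ((starRingEnd ℂ Γ)⁻¹ - Γ⁻¹) = 0 := by linear_combination h2 - h2'
    rcases mul_eq_zero.mp hd with h | h
    · exact h
    · exfalso
      apply hΓinvne
      rw [map_inv₀]
      linear_combination h
  have hS11M : S 1 1 * M 1 0 = 0 := by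
    rw [hS10] at h2; linear_combination h2
  rcases mul_eq_zero.mp hS11M with hS11 | hM10
  · exact hdetS (by rw [hS10, hS11]; ring)
  · -- M 1 0 = 0 : then M 0 0 is a root of the quadratic, but M 0 0 is real
    have hquad : (M 0 0 - Γ) * (M 0 0 - Γ⁻¹) = 0 := by
      have : M 0 0 * M 1 1 = 1 := by rw [hM10] at hdetM; linear_combination hdetM
      linear_combination M 0 0 * htr - this + hΓΓ
    rcases mul_eq_zero.mp hquad with h | h
    · apply hΓne
      have hΓeq : Γ = M 0 0 := by linear_combination -h
      rw [hΓeq]; exact hMreal 0 0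
    · apply hΓinvne
      have hΓeq : Γ⁻¹ = M 0 0 := by linear_combination -h
      rw [hΓeq]; exact hMreal 0 0
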